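/- Let n ≥ 1 and λ_1, …, λ_n > 0. Let S = (S_1,…,S_n) be a random vector of nonnegative real random variables; let N = (N_1,…,N_n) with values in ℕ^n be such that the joint law of (S, N) is ν ⊗ κ, where ν is the law of S on [0,∞)^n and, for each s, κ(s) is the product over p = 1,…,n of Poisson distributions on ℕ with means λ_p s_p; and let (Θ_{p,k})_{1≤p≤n, k≥1} be an i.i.d. family of nonnegative real random variables with LST π(ω) = E[e^{−ω Θ_{1,1}}], the whole family being independent of the pair (S, N). Define C = ∑_{p=1}^n S_p + ∑_{p=1}^n ∑_{k=1}^{N_p} Θ_{p,k}. Then for every ω ≥ 0: E[ e^{−ωC} ] = E[ exp( −∑_{p=1}^n ( ω + λ_p (1 − π(ω)) ) S_p ) ]. -/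

import Mathlib

open MeasureTheory ProbabilityTheory

/-- The Poisson probability mass function with (real) mean `r`: `e^{-r} r^k / k!`. -/
noncomputable def poissonPdf (r : ℝ) (k : ℕ) : ℝ :=
  Real.exp (-r) * r ^ k / (Nat.factorial k)

lemma aux_lintegral_prod_iIndep {Ω ι : Type*} [MeasurableSpace Ω] {μ : Measure Ω}
    [IsProbabilityMeasure μ] {W : ι → Ω → ENNReal}
    (h : iIndepFun W μ) (hm : ∀ i, Measurable (W i)) (T : Finset ι) :
    ∫⁻ x, ∏ i ∈ T, W i x ∂μ = ∏ i ∈ T, ∫⁻ x, W i x ∂μ := by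
  classical
  induction T using Finset.induction_on with
  | empty => simp
  | @insert i T hi ih =>
    have hprodmeas : Measurable fun x => ∏ j ∈ T, W j x :=
      Finset.measurable_prod _ fun j _ => hm j
    have hind : IndepFun (fun x => ∏ j ∈ T, W j x) (W i) μ := by
      have := h.indepFun_finsetProd_of_notMem hm hi
      simpa [Finset.prod_fn] using this
    simp only [Finset.prod_insert hi]
    rw [show (∫⁻ x, W i x * ∏ j ∈ T, W j x ∂μ)
        = ∫⁻ x, (fun y => ∏ j ∈ T, W j y) x * W i x ∂μ from by
      congr 1; funext x; ring,
      lintegral_mul_eq_lintegral_mul_lintegral_of_indepFun'' hprodmeas.aemeasurable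
        (hm i).aemeasurable hind, ih, mul_comm]

lemma aux_tsum_pi_prod : ∀ (n : ℕ) (g : Fin n → ℕ → ENNReal),
    ∑' f : Fin n → ℕ, ∏ p, g p (f p) = ∏ p, ∑' k, g p k := by
  intro n
  induction n with
  | zero =>
    intro g
    rw [tsum_eq_single (fun i : Fin 0 => 0)
      (fun b hb => (hb (funext fun i => i.elim0)).elim)]
    simp
  | succ m ih =>
    intro g
    rw [← (Fin.consEquiv fun _ => ℕ).tsum_eq]
    have : ∀ q : ℕ × (Fin m → ℕ),
        (∏ p, g p ((Fin.consEquiv fun _ => ℕ) q p))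
          = g 0 q.1 * ∏ p : Fin m, g p.succ (q.2 p) := by
      intro q
      rw [Fin.prod_univ_succ]
      simp [Fin.consEquiv]
    simp only [this]
    rw [ENNReal.tsum_prod']
    simp only [ENNReal.tsum_mul_left]
    rw [ENNReal.tsum_mul_right, ih, Fin.prod_univ_succ]

lemma aux_poisson_sum (r q : ℝ) (hr : 0 ≤ r) (hq : 0 ≤ q) :
    ∑' k : ℕ, ENNReal.ofReal (poissonPdf r k) * (ENNReal.ofReal q) ^ k
      = ENNReal.ofReal (Real.exp (-(r * (1 - q)))) := by
  have h1 : ∀ k : ℕ, ENNReal.ofReal (poissonPdf r k) * (ENNReal.ofReal q) ^ k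
      = ENNReal.ofReal (Real.exp (-r) * ((r * q) ^ k / (Nat.factorial k))) := by
    intro k
    rw [← ENNReal.ofReal_pow hq, ← ENNReal.ofReal_mul (by
      unfold poissonPdf
      positivity)]
    congr 1
    unfold poissonPdf
    rw [mul_pow]
    ring
  simp only [h1]
  have hsumm : Summable fun k : ℕ => Real.exp (-r) * ((r * q) ^ k / (Nat.factorial k)) :=
    (Real.summable_pow_div_factorial (r * q)).mul_left _
  rw [← ENNReal.ofReal_tsum_of_nonneg (fun k => by positivity) hsumm]
  congr 1
  rw [tsum_mul_left]
  have : ∑' k : ℕ, (r * q) ^ k / (Nat.factorial k : ℝ) = Real.exp (r * q) := by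
    rw [Real.exp_eq_exp_ℝ, NormedSpace.exp_eq_tsum_div]
  rw [this, ← Real.exp_add]
  congr 1
  ring

set_option maxHeartbeats 1000000 in
/-- The probabilistic core of Theorem 5.2 of the paper (cycle-time LST for an
exhaustively served queue): the pair `(S, N)` has law `ν ⊗ κ` with `κ` the
product-Poisson kernel with means `λ_p s_p`; `(Θ p k)` is an i.i.d. family of
nonnegative random variables with LST `π`, independent of `(S, N)`; and
`C = ∑ p, S_p + ∑ p, ∑_{k < N_p} Θ p k`. Then for every `ω ≥ 0`,
`E[e^{-ωC}] = E[exp (-∑ p, (ω + λ_p (1 - π(ω))) S_p)]`. -/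
theorem stmt7 {Ω : Type*} [MeasurableSpace Ω] (μ : Measure Ω) [IsProbabilityMeasure μ]
    (n : ℕ) (hn : 0 < n) (lam : Fin n → ℝ) (hlam : ∀ p, 0 < lam p)
    (ν : Measure (Fin n → ℝ)) [IsProbabilityMeasure ν]
    (hνsupp : ∀ᵐ s ∂ν, ∀ p, 0 ≤ s p)
    (S : Ω → Fin n → ℝ) (N : Ω → Fin n → ℕ) (hS : Measurable S) (hN : Measurable N)
    (hSlaw : Measure.map S μ = ν)
    (hjoint : ∀ A : Set (Fin n → ℝ), MeasurableSet A → ∀ f : Fin n → ℕ,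
      μ (S ⁻¹' A ∩ {x | N x = f})
        = ∫⁻ s in A, ENNReal.ofReal (∏ p, poissonPdf (lam p * s p) (f p)) ∂ν)
    (Θ : Fin n → ℕ → Ω → ℝ) (hΘmeas : ∀ p k, Measurable (Θ p k))
    (hΘ0 : ∀ p k, ∀ᵐ x ∂μ, 0 ≤ Θ p k x)
    (hiid : iIndepFun (fun pk : Fin n × ℕ => Θ pk.1 pk.2) μ)
    (hident : ∀ p k, Measure.map (Θ p k) μ = Measure.map (Θ ⟨0, hn⟩ 0) μ)
    (hindep : IndepFun (fun x => (S x, N x))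
      (fun x (pk : Fin n × ℕ) => Θ pk.1 pk.2 x) μ)
    (π : ℝ → ℝ) (hπ : ∀ ω : ℝ, π ω = ∫ x, Real.exp (-ω * Θ ⟨0, hn⟩ 0 x) ∂μ)
    (C : Ω → ℝ)
    (hC : ∀ x, C x = ∑ p, S x p + ∑ p, ∑ k ∈ Finset.range (N x p), Θ p k x)
    (ω : ℝ) (hω : 0 ≤ ω) :
    ∫ x, Real.exp (-ω * C x) ∂μ
      = ∫ x, Real.exp (-∑ p, (ω + lam p * (1 - π ω)) * S x p) ∂μ := by
  classical
  have hexp_nonneg : ∀ y : ℝ, (0:ℝ) ≤ Real.exp y := fun y => (Real.exp_pos y).le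
  have hSp : ∀ p, Measurable fun x => S x p := fun p => (measurable_pi_apply p).comp hS
  have hNp : ∀ p, Measurable fun x => N x p := fun p => (measurable_pi_apply p).comp hN
  -- measurability of C
  have hCmeas : Measurable C := by
    have hCe : C = fun x => ∑ p, S x p + ∑ p, ∑ k ∈ Finset.range (N x p), Θ p k x := funext hC
    rw [hCe]
    refine Measurable.add (Finset.measurable_sum _ fun p _ => hSp p)
      (Finset.measurable_sum _ fun p _ => ?_)
    have : (fun x => ∑ k ∈ Finset.range (N x p), Θ p k x)
        = (fun q : Ω × ℕ => ∑ k ∈ Finset.range q.2, Θ p k q.1) ∘ fun x => (x, N x p) := rfl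
    rw [this]
    exact (measurable_from_prod_countable_left fun m =>
      Finset.measurable_sum (Finset.range m) fun k _ => hΘmeas p k).comp
      (measurable_id.prodMk (hNp p))
  set π₀ := π ω with hπ₀def
  set P : ENNReal := ENNReal.ofReal π₀ with hPdef
  have hπ0nonneg : 0 ≤ π₀ := by
    rw [hπ₀def, hπ]; exact integral_nonneg fun x => hexp_nonneg _
  -- the ℝ≥0∞-valued family
  set W : Fin n × ℕ → Ω → ENNReal :=
    fun pk x => ENNReal.ofReal (Real.exp (-ω * Θ pk.1 pk.2 x)) with hWdef
  have hmg : Measurable fun y : ℝ => ENNReal.ofReal (Real.exp (-ω * y)) :=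
    ENNReal.measurable_ofReal.comp (Real.measurable_exp.comp (measurable_const.mul measurable_id))
  have hWmeas : ∀ pk, Measurable (W pk) := fun pk => hmg.comp (hΘmeas pk.1 pk.2)
  have hWiid : iIndepFun W μ :=
    hiid.comp (fun _ y => ENNReal.ofReal (Real.exp (-ω * y))) fun _ => hmg
  -- each W has lintegral P
  have hθlint : ∀ pk : Fin n × ℕ, ∫⁻ x, W pk x ∂μ = P := by
    intro pk
    have h1 : ∫⁻ x, W pk x ∂μ = ∫⁻ x, ENNReal.ofReal (Real.exp (-ω * Θ ⟨0, hn⟩ 0 x)) ∂μ := by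
      rw [hWdef]
      calc ∫⁻ x, ENNReal.ofReal (Real.exp (-ω * Θ pk.1 pk.2 x)) ∂μ
          = ∫⁻ y, ENNReal.ofReal (Real.exp (-ω * y)) ∂(Measure.map (Θ pk.1 pk.2) μ) :=
            (lintegral_map hmg (hΘmeas pk.1 pk.2)).symm
        _ = ∫⁻ y, ENNReal.ofReal (Real.exp (-ω * y)) ∂(Measure.map (Θ ⟨0, hn⟩ 0) μ) := by
            rw [hident pk.1 pk.2]
        _ = _ := lintegral_map hmg (hΘmeas _ _)
    rw [h1]
    have hint : Integrable (fun x => Real.exp (-ω * Θ ⟨0, hn⟩ 0 x)) μ := by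
      refine Integrable.mono' (integrable_const (1:ℝ))
        (Real.measurable_exp.comp ((measurable_const.mul (hΘmeas _ _)))).aestronglyMeasurable ?_
      filter_upwards [hΘ0 ⟨0, hn⟩ 0] with x hx
      rw [Real.norm_eq_abs, abs_of_pos (Real.exp_pos _)]
      exact Real.exp_le_one_iff.mpr (by nlinarith)
    rw [hPdef, hπ₀def, hπ]
    exact (ofReal_integral_eq_lintegral_ofReal hint (ae_of_all _ fun x => hexp_nonneg _)).symm
  -- singletons in (Fin n → ℕ) are measurable
  have hsingle : ∀ f : Fin n → ℕ, MeasurableSet {f} := by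
    intro f
    have : ({f} : Set (Fin n → ℕ)) = ⋂ p, (fun g : Fin n → ℕ => g p) ⁻¹' {f p} := by
      ext g; simp [funext_iff]
    rw [this]
    exact MeasurableSet.iInter fun p => measurable_pi_apply p (measurableSet_singleton _)
  set A : Ω → ENNReal := fun x => ENNReal.ofReal (Real.exp (-ω * ∑ p, S x p)) with hAdef
  have hAmeas : Measurable A := hmg.comp (Finset.measurable_sum _ fun p _ => hSp p)
  set Bf : (Fin n → ℕ) → Ω → ENNReal :=
    fun f x => ∏ p, ∏ k ∈ Finset.range (f p), W (p, k) x with hBfdef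
  have hBfmeas : ∀ f, Measurable (Bf f) := fun f =>
    Finset.measurable_prod _ fun p _ => Finset.measurable_prod _ fun k _ => hWmeas _
  set Ef : (Fin n → ℕ) → Set Ω := fun f => {x | N x = f} with hEfdef
  have hEfmeas : ∀ f, MeasurableSet (Ef f) := fun f => hN (hsingle f)
  -- pointwise decomposition
  have hdecomp : ∀ x, ENNReal.ofReal (Real.exp (-ω * C x))
      = ∑' f : Fin n → ℕ, (Ef f).indicator A x * Bf f x := by
    intro x
    rw [tsum_eq_single (N x) (fun f hf => by
      rw [Set.indicator_of_notMem (show x ∉ Ef f from fun hx => hf (Eq.symm hx)) A,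
        zero_mul])]
    rw [Set.indicator_of_mem (show x ∈ Ef (N x) from rfl)]
    rw [hC x]
    have e1 : -ω * (∑ p, S x p + ∑ p, ∑ k ∈ Finset.range (N x p), Θ p k x)
        = -ω * ∑ p, S x p + ∑ p, ∑ k ∈ Finset.range (N x p), -ω * Θ p k x := by
      rw [mul_add]
      congr 1
      rw [Finset.mul_sum]
      exact Finset.sum_congr rfl fun p _ => Finset.mul_sum _ _ _
    rw [e1, Real.exp_add, ENNReal.ofReal_mul (hexp_nonneg _)]
    congr 1
    rw [Real.exp_sum, ENNReal.ofReal_prod_of_nonneg (fun _ _ => hexp_nonneg _)]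
    exact Finset.prod_congr rfl fun p _ => by
      rw [Real.exp_sum, ENNReal.ofReal_prod_of_nonneg (fun _ _ => hexp_nonneg _)]
  -- lintegral of Bf
  have hBfint : ∀ f, ∫⁻ x, Bf f x ∂μ = ∏ p, P ^ (f p) := by
    intro f
    have hdisj : ∀ p ∈ (Finset.univ : Finset (Fin n)), ∀ p' ∈ Finset.univ, p ≠ p' →
        Disjoint (({p} : Finset (Fin n)) ×ˢ Finset.range (f p))
          (({p'} : Finset (Fin n)) ×ˢ Finset.range (f p')) := by
      intro p _ p' _ hpp'
      rw [Finset.disjoint_left]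
      rintro ⟨a, b⟩ hab hab'
      simp only [Finset.mem_product, Finset.mem_singleton] at hab hab'
      exact hpp' (hab.1.symm.trans hab'.1)
    have hT : ∀ h : Fin n × ℕ → ENNReal,
        ∏ pk ∈ Finset.univ.biUnion (fun p => ({p} : Finset (Fin n)) ×ˢ Finset.range (f p)), h pk
          = ∏ p, ∏ k ∈ Finset.range (f p), h (p, k) := by
      intro h
      rw [Finset.prod_biUnion hdisj]
      exact Finset.prod_congr rfl fun p _ => by
        rw [Finset.prod_product, Finset.prod_singleton]
    calc ∫⁻ x, Bf f x ∂μ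
        = ∫⁻ x, ∏ pk ∈ Finset.univ.biUnion
            (fun p => ({p} : Finset (Fin n)) ×ˢ Finset.range (f p)), W pk x ∂μ := by
          refine lintegral_congr fun x => ?_
          rw [hT fun pk => W pk x]
      _ = ∏ pk ∈ Finset.univ.biUnion
            (fun p => ({p} : Finset (Fin n)) ×ˢ Finset.range (f p)), ∫⁻ x, W pk x ∂μ :=
          aux_lintegral_prod_iIndep hWiid hWmeas _
      _ = ∏ p, P ^ (f p) := by
          rw [show (fun pk => ∫⁻ x, W pk x ∂μ) = fun _ => P from funext hθlint] at *
          rw [hT fun _ => P]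
          exact Finset.prod_congr rfl fun p _ => by
            rw [Finset.prod_const, Finset.card_range]
  -- lintegral over Ef of A via the joint law
  have hpdfmeas : ∀ f : Fin n → ℕ, Measurable fun s : Fin n → ℝ =>
      ENNReal.ofReal (∏ p, poissonPdf (lam p * s p) (f p)) := by
    intro f
    refine ENNReal.measurable_ofReal.comp (Finset.measurable_prod _ fun p _ => ?_)
    have hcont : Continuous fun r : ℝ => poissonPdf r (f p) := by
      unfold poissonPdf; fun_prop
    exact hcont.measurable.comp (measurable_const.mul (measurable_pi_apply p))
  set G : (Fin n → ℝ) → ENNReal :=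
    fun s => ENNReal.ofReal (Real.exp (-ω * ∑ p, s p)) with hGdef
  have hGmeas : Measurable G :=
    hmg.comp (Finset.measurable_sum _ fun p _ => measurable_pi_apply p)
  have hXint : ∀ f, ∫⁻ x, (Ef f).indicator A x ∂μ
      = ∫⁻ s, ENNReal.ofReal (∏ p, poissonPdf (lam p * s p) (f p)) * G s ∂ν := by
    intro f
    rw [lintegral_indicator (hEfmeas f)]
    have hmap : Measure.map S (μ.restrict (Ef f))
        = ν.withDensity (fun s => ENNReal.ofReal (∏ p, poissonPdf (lam p * s p) (f p))) := by
      ext B hB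
      rw [Measure.map_apply hS hB, Measure.restrict_apply (hS hB), withDensity_apply _ hB]
      exact hjoint B hB f
    calc ∫⁻ x in Ef f, A x ∂μ
        = ∫⁻ s, G s ∂(Measure.map S (μ.restrict (Ef f))) := (lintegral_map hGmeas hS).symm
      _ = _ := by
          rw [hmap, lintegral_withDensity_eq_lintegral_mul _ (hpdfmeas f) hGmeas]
          rfl
  -- main computation
  have hmain : ∫⁻ x, ENNReal.ofReal (Real.exp (-ω * C x)) ∂μ
      = ∫⁻ s, ENNReal.ofReal (Real.exp (-∑ p, (ω + lam p * (1 - π₀)) * s p)) ∂ν := by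
    rw [lintegral_congr hdecomp,
      lintegral_tsum (f := fun f x => (Ef f).indicator A x * Bf f x)
        fun f => ((hAmeas.indicator (hEfmeas f)).mul (hBfmeas f)).aemeasurable]
    have hterm : ∀ f : Fin n → ℕ,
        ∫⁻ x, (Ef f).indicator A x * Bf f x ∂μ
          = ∫⁻ s, G s * (ENNReal.ofReal (∏ p, poissonPdf (lam p * s p) (f p))
              * ∏ p, P ^ (f p)) ∂ν := by
      intro f
      have hφmeas : Measurable fun q : (Fin n → ℝ) × (Fin n → ℕ) =>
          ({q : (Fin n → ℝ) × (Fin n → ℕ) | q.2 = f}).indicator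
            (fun q => ENNReal.ofReal (Real.exp (-ω * ∑ p, q.1 p))) q :=
        Measurable.indicator (hmg.comp (Finset.measurable_sum _ fun p _ =>
          ((measurable_pi_apply p).comp measurable_fst)))
          (measurable_snd (hsingle f))
      have hψmeas : Measurable fun θ : Fin n × ℕ → ℝ =>
          ∏ p, ∏ k ∈ Finset.range (f p), ENNReal.ofReal (Real.exp (-ω * θ (p, k))) :=
        Finset.measurable_prod _ fun p _ => Finset.measurable_prod _ fun k _ =>
          hmg.comp (measurable_pi_apply _)
      have hind := hindep.comp hφmeas hψmeas
      have he1 : (fun q : (Fin n → ℝ) × (Fin n → ℕ) =>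
          ({q : (Fin n → ℝ) × (Fin n → ℕ) | q.2 = f}).indicator
            (fun q => ENNReal.ofReal (Real.exp (-ω * ∑ p, q.1 p))) q) ∘ (fun x => (S x, N x))
          = fun x => (Ef f).indicator A x := by
        funext x
        simp only [Function.comp_apply, Set.indicator_apply]
        rfl
      have he2 : (fun θ : Fin n × ℕ → ℝ => ∏ p, ∏ k ∈ Finset.range (f p),
          ENNReal.ofReal (Real.exp (-ω * θ (p, k)))) ∘ (fun x (pk : Fin n × ℕ) => Θ pk.1 pk.2 x)
          = Bf f := rfl
      rw [he1, he2] at hind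
      rw [lintegral_mul_eq_lintegral_mul_lintegral_of_indepFun''
        (hAmeas.indicator (hEfmeas f)).aemeasurable (hBfmeas f).aemeasurable hind,
        hBfint f, hXint f,
        ← lintegral_mul_const (f := fun s => ENNReal.ofReal (∏ p, poissonPdf (lam p * s p) (f p)) * G s)
          _ ((hpdfmeas f).mul hGmeas)]
      exact lintegral_congr fun s => by ring
    simp only [hterm]
    have hA : ∀ f : Fin n → ℕ, AEMeasurable (fun s => G s *
        (ENNReal.ofReal (∏ p, poissonPdf (lam p * s p) (f p)) * ∏ p, P ^ (f p))) ν := fun f =>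
      (hGmeas.fun_mul ((hpdfmeas f).fun_mul measurable_const)).aemeasurable
    rw [← lintegral_tsum hA]
    refine lintegral_congr_ae ?_
    filter_upwards [hνsupp] with s hs
    have hpdfnn : ∀ p k, 0 ≤ poissonPdf (lam p * s p) k := by
      intro p k
      have h0 : 0 ≤ lam p * s p := mul_nonneg (hlam p).le (hs p)
      unfold poissonPdf
      positivity
    rw [ENNReal.tsum_mul_left]
    have hps : ∀ f : Fin n → ℕ,
        ENNReal.ofReal (∏ p, poissonPdf (lam p * s p) (f p)) * ∏ p, P ^ (f p)
          = ∏ p, ENNReal.ofReal (poissonPdf (lam p * s p) (f p)) * P ^ (f p) := by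
      intro f
      rw [ENNReal.ofReal_prod_of_nonneg (fun p _ => hpdfnn p (f p)),
        ← Finset.prod_mul_distrib]
    simp only [hps]
    rw [aux_tsum_pi_prod n (fun p k => ENNReal.ofReal (poissonPdf (lam p * s p) k) * P ^ k)]
    have hfac : ∀ p : Fin n, (∑' k : ℕ, ENNReal.ofReal (poissonPdf (lam p * s p) k) * P ^ k)
        = ENNReal.ofReal (Real.exp (-(lam p * s p * (1 - π₀)))) := fun p =>
      aux_poisson_sum _ _ (mul_nonneg (hlam p).le (hs p)) hπ0nonneg
    simp only [hfac]
    rw [show (∏ p, ENNReal.ofReal (Real.exp (-(lam p * s p * (1 - π₀)))))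
        = ENNReal.ofReal (Real.exp (∑ p, -(lam p * s p * (1 - π₀)))) from by
      rw [Real.exp_sum, ENNReal.ofReal_prod_of_nonneg fun _ _ => hexp_nonneg _]]
    rw [hGdef, ← ENNReal.ofReal_mul (hexp_nonneg _), ← Real.exp_add]
    congr 1
    rw [Finset.mul_sum, ← Finset.sum_add_distrib, ← Finset.sum_neg_distrib]
    exact congrArg Real.exp (Finset.sum_congr rfl fun p _ => by ring)
  -- convert both sides to lintegrals
  have hmeasR : Measurable fun x => Real.exp (-∑ p, (ω + lam p * (1 - π₀)) * S x p) :=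
    Real.measurable_exp.comp ((Finset.measurable_sum _ fun p _ =>
      (measurable_const.mul (hSp p))).neg)
  have hmeasRs : Measurable fun s : Fin n → ℝ =>
      ENNReal.ofReal (Real.exp (-∑ p, (ω + lam p * (1 - π₀)) * s p)) :=
    ENNReal.measurable_ofReal.comp (Real.measurable_exp.comp
      ((Finset.measurable_sum _ fun p _ =>
        (measurable_const.mul (measurable_pi_apply p))).neg))
  have hR : ∫⁻ x, ENNReal.ofReal (Real.exp (-∑ p, (ω + lam p * (1 - π₀)) * S x p)) ∂μ
      = ∫⁻ s, ENNReal.ofReal (Real.exp (-∑ p, (ω + lam p * (1 - π₀)) * s p)) ∂ν := by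
    rw [← hSlaw, lintegral_map hmeasRs hS]
  rw [integral_eq_lintegral_of_nonneg_ae (ae_of_all _ fun x => hexp_nonneg _)
      ((Real.measurable_exp.comp (measurable_const.mul hCmeas) :
        Measurable fun x => Real.exp (-ω * C x))).aestronglyMeasurable,
    integral_eq_lintegral_of_nonneg_ae (ae_of_all _ fun x => hexp_nonneg _)
      hmeasR.aestronglyMeasurable]
  rw [hmain, ← hR]
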